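/- Let X be a complex Banach space, let ℤ^{∞*} = ⊕_{n≥1} ℤ be the dual group of 𝕋^ℕ via the characters χ_J(θ) = ∏_n e^{i j_n θ_n}, let P be the reversed lexicographic order and P(ε) the order associated to ε ∈ {−1,1}^ℕ. Then for every n ≥ 1, finite sets K_k ⊆ ℤ^k \ ℤ^{k−1} (1 ≤ k ≤ n), and coefficients a_J ∈ X, one has T_P ∘ T_{P(ε)} (∑_{k=1}^n ∑_{J∈K_k} a_J χ_J) = − ∑_{k=1}^n ε_k (∑_{J∈K_k} a_J χ_J); equivalently, replacing ε by −ε, the composition of the two conjugate function operators realizes every martingale transform ∑_{k=1}^n ε_k (∑_{J∈K_k} a_J χ_J) of the trigonometric polynomial ∑_{k=1}^n ∑_{J∈K_k} a_J χ_J. -/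
import Mathlib


open Complex

instance : Fact (0 < 2 * Real.pi) := ⟨by positivity⟩

/-- `ℤ^{∞*} = ⊕_{n≥1} ℤ`, the dual group of `𝕋^ℕ` (the coordinate of Lean index `k : ℕ`
represents the paper's coordinate `j_{k+1}`). -/
abbrev Zinf := ℕ →₀ ℤ

/-- The infinite torus `𝕋^ℕ`, a countable product of circle groups. -/
abbrev TorusInf := ℕ → AddCircle (2 * Real.pi)

/-- `n(J)`: the largest `n ≥ 1` such that `j_n ≠ 0`, and `n(0) = 0`. -/
noncomputable def nIdx (J : Zinf) : ℕ := by
  classical exact if h : J.support.Nonempty then J.support.max' h + 1 else 0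

/-- `j_{n(J)}`: the last nonzero coordinate of `J` (and `0` if `J = 0`). -/
noncomputable def lastCoeff (J : Zinf) : ℤ := J (nIdx J - 1)

/-- The order `P(ε) = {J : ε_{n(J)} j_{n(J)} > 0} ∪ {0}`. -/
def Pe (ε : ℕ → ℤ) : Set Zinf := {J | J ≠ 0 ∧ 0 < ε (nIdx J) * lastCoeff J} ∪ {0}

/-- The reversed lexicographic order `P = {J : j_{n(J)} > 0} ∪ {0}`. -/
def revLexP : Set Zinf := {J | J ≠ 0 ∧ 0 < lastCoeff J} ∪ {0}

/-- `ℤ^n = {J ∈ ℤ^{∞*} : n(J) ≤ n}`. -/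
def Zn (n : ℕ) : Set Zinf := {J | nIdx J ≤ n}

/-- The signum function of an order `Q`. -/
noncomputable def sgnOrder {Γ : Type*} [AddCommGroup Γ] (Q : Set Γ) (x : Γ) : ℝ := by
  classical exact if x = 0 then 0 else if x ∈ Q then 1 else -1

/-- The character `χ_J(θ) = ∏_n e^{i j_n θ_n}` of `𝕋^ℕ` attached to `J ∈ ℤ^{∞*}`. -/
noncomputable def charJ (J : Zinf) (θ : TorusInf) : ℂ :=
  ∏ k ∈ J.support, (fourier (J k) (θ k) : ℂ)

/-- For a trigonometric polynomial `f = ∑_{k=1}^n ∑_{J∈K_k} a_J χ_J` with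
`K_k ⊆ ℤ^k \ ℤ^{k−1}`, the composition `T_P ∘ T_{P(ε)}` of the conjugate function
operators for the reversed lexicographic order `P` and for `P(ε)` satisfies
`T_P ∘ T_{P(ε)} f = −∑_{k=1}^n ε_k (∑_{J∈K_k} a_J χ_J)`; equivalently (replacing `ε`
by `−ε`) the composition realizes every martingale transform
`∑_{k=1}^n ε_k (∑_{J∈K_k} a_J χ_J)` of `f`. -/
lemma main_key (ε : ℕ → ℤ) (k : ℕ) (hk : 1 ≤ k) (hε : ε k = 1 ∨ ε k = -1)
    (J : Zinf) (hJ : J ∈ Zn k \ Zn (k - 1)) :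
    (-I * (sgnOrder revLexP J : ℂ)) * (-I * (sgnOrder (Pe ε) J : ℂ)) = -(ε k : ℂ) := by
  classical
  obtain ⟨h1, h2⟩ := hJ
  simp only [Zn, Set.mem_setOf_eq] at h1 h2
  have hnk : nIdx J = k := by omega
  have hne : J.support.Nonempty := by
    by_contra h
    simp [nIdx, h] at hnk
    omega
  have hJ0 : J ≠ 0 := Finsupp.support_nonempty_iff.mp hne
  have hmax : nIdx J - 1 = J.support.max' hne := by simp [nIdx, hne]
  have hlc : lastCoeff J ≠ 0 := by
    rw [lastCoeff, hmax]
    exact Finsupp.mem_support_iff.mp (J.support.max'_mem hne)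
  have hrev : sgnOrder revLexP J = if 0 < lastCoeff J then (1:ℝ) else -1 := by
    unfold sgnOrder revLexP
    by_cases h : 0 < lastCoeff J <;> simp [hJ0, h]
  have hpe : sgnOrder (Pe ε) J = if 0 < ε k * lastCoeff J then (1:ℝ) else -1 := by
    unfold sgnOrder Pe
    by_cases h : 0 < ε k * lastCoeff J <;> simp [hJ0, hnk, h]
  rcases hε with hε | hε <;> rcases lt_or_gt_of_ne hlc with hc | hc <;>
    rw [hrev, hpe, hε] <;>
    norm_num [hc, hc.not_gt, hc.le, mul_pos_iff]

theorem conjugation_composition_eq_martingale_transform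
    {X : Type*} [NormedAddCommGroup X] [NormedSpace ℂ X] [CompleteSpace X]
    (n : ℕ) (hn : 1 ≤ n) (K : ℕ → Finset Zinf)
    (hK : ∀ k ∈ Finset.Icc 1 n, ∀ J ∈ K k, J ∈ Zn k \ Zn (k - 1))
    (a : Zinf → X) (ε : ℕ → ℤ) (hε : ∀ k, ε k = 1 ∨ ε k = -1) :
    (∀ θ : TorusInf,
      ∑ k ∈ Finset.Icc 1 n, ∑ J ∈ K k,
          ((-I * (sgnOrder revLexP J : ℂ)) * (-I * (sgnOrder (Pe ε) J : ℂ)) * charJ J θ) • a J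
        = - ∑ k ∈ Finset.Icc 1 n, (ε k : ℂ) • ∑ J ∈ K k, charJ J θ • a J) ∧
    (∀ θ : TorusInf,
      ∑ k ∈ Finset.Icc 1 n, ∑ J ∈ K k,
          ((-I * (sgnOrder revLexP J : ℂ)) *
            (-I * (sgnOrder (Pe (fun m => -ε m)) J : ℂ)) * charJ J θ) • a J
        = ∑ k ∈ Finset.Icc 1 n, (ε k : ℂ) • ∑ J ∈ K k, charJ J θ • a J) := by
  constructor
  · intro θ
    rw [← Finset.sum_neg_distrib]
    refine Finset.sum_congr rfl fun k hk => ?_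
    have hk1 : 1 ≤ k := (Finset.mem_Icc.mp hk).1
    rw [← neg_smul, Finset.smul_sum]
    refine Finset.sum_congr rfl fun J hJ => ?_
    rw [main_key ε k hk1 (hε k) J (hK k hk J hJ)]
    rw [smul_smul]
  · intro θ
    refine Finset.sum_congr rfl fun k hk => ?_
    have hk1 : 1 ≤ k := (Finset.mem_Icc.mp hk).1
    have hε' : (fun m => -ε m) k = 1 ∨ (fun m => -ε m) k = -1 := by
      rcases hε k with h | h <;> simp [h]
    rw [Finset.smul_sum]
    refine Finset.sum_congr rfl fun J hJ => ?_
    rw [main_key (fun m => -ε m) k hk1 hε' J (hK k hk J hJ)]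
    rw [smul_smul]
    congr 1
    push_cast
    ring
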